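/- The only rational points (x, y) on the curve y² = x³ - x are (0,0), (1,0), and (-1,0); equivalently, the torsion statement that y = 0 for every rational solution. -/

import Mathlib

set_option maxHeartbeats 1600000

private lemma sq_pos_of_coprime' {a b c : ℤ} (h : IsCoprime a b) (heq : a * b = c ^ 2)
    (ha : 0 < a) : ∃ r : ℤ, 0 ≤ r ∧ a = r ^ 2 := by
  obtain ⟨r, hr | hr⟩ := Int.sq_of_isCoprime h heq
  · exact ⟨|r|, abs_nonneg r, by rwa [sq_abs]⟩
  · nlinarith [sq_nonneg r]

private lemma sq_mod_four (c : ℤ) : c ^ 2 % 4 = 0 ∨ c ^ 2 % 4 = 1 := by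
  rcases Int.even_or_odd c with ⟨k, rfl⟩ | ⟨k, rfl⟩
  · left; have h : (k + k) ^ 2 = 4 * (k * k) := by ring
    rw [h]; omega
  · right; have h : (2 * k + 1) ^ 2 = 4 * (k * k + k) + 1 := by ring
    rw [h]; omega

private lemma not_even_even {x y : ℤ} (h : IsCoprime x y) (hx : Even x) (hy : Even y) :
    False := by
  obtain ⟨u, v, huv⟩ := h
  obtain ⟨k, rfl⟩ := hx
  obtain ⟨l, rfl⟩ := hy
  have h2 : (2 : ℤ) ∣ 1 := ⟨u * k + v * l, by linear_combination -huv⟩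
  norm_num at h2

private lemma no44 : ∀ a : ℕ, ∀ b c : ℤ, (a : ℤ) ^ 4 = b ^ 4 + c ^ 2 → b = 0 ∨ c = 0 := by
  intro a
  induction a using Nat.strong_induction_on with
  | _ a IH =>
  intro b c h
  by_contra hcon
  push_neg at hcon
  obtain ⟨hb, hc⟩ := hcon
  -- pass to absolute values
  have hB4 : |b| ^ 4 = b ^ 4 := by rw [← abs_pow]; exact abs_of_nonneg (by positivity)
  have hC2 : |c| ^ 2 = c ^ 2 := by rw [← abs_pow]; exact abs_of_nonneg (by positivity)
  set B := |b| with hBdef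
  set C := |c| with hCdef
  have hB0 : 0 < B := abs_pos.mpr hb
  have hC0 : 0 < C := abs_pos.mpr hc
  have h' : (a : ℤ) ^ 4 = B ^ 4 + C ^ 2 := by rw [hB4, hC2]; exact h
  have ha0 : 0 < a := by
    by_contra ha
    have : a = 0 := by omega
    subst this
    push_cast at h'
    nlinarith [pow_pos hB0 4, pow_pos hC0 2]
  have haZ : (0 : ℤ) < (a : ℤ) := by exact_mod_cast ha0
  clear h hB4 hC2 hb hc hBdef hCdef
  -- reduce to the coprime case
  set g : ℕ := Int.gcd (a : ℤ) B with hgdef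
  rcases Nat.lt_or_ge g 2 with hg2 | hg2
  case _ => -- g ≤ 1, i.e. coprime (g = 0 impossible)
    have hg1 : g = 1 := by
      rcases Nat.lt_or_ge g 1 with h0 | h1
      · exfalso
        have : g = 0 := by omega
        rw [hgdef] at this
        rw [Int.gcd_eq_zero_iff] at this
        have := this.2
        omega
      · omega
    have hco : IsCoprime (a : ℤ) B := Int.isCoprime_iff_gcd_eq_one.mpr hg1
    -- a must be odd
    have haodd : Odd (a : ℤ) := by
      rcases Int.even_or_odd (a : ℤ) with hae | hao
      · exfalso
        have hBodd : Odd B := by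
          rcases Int.even_or_odd B with hBe | hBo
          · exact absurd (not_even_even hco hae hBe) (by simp)
          · exact hBo
        obtain ⟨k, hk⟩ := hae
        obtain ⟨l, hl⟩ := hBodd
        have e1 : (a : ℤ) ^ 4 = 4 * (4 * k ^ 4) := by rw [hk]; ring
        have e2 : B ^ 4 = 4 * (4 * l ^ 4 + 8 * l ^ 3 + 6 * l ^ 2 + 2 * l) + 1 := by
          rw [hl]; ring
        have e3 := sq_mod_four C
        have e4 : C ^ 2 =
            4 * (4 * k ^ 4 - (4 * l ^ 4 + 8 * l ^ 3 + 6 * l ^ 2 + 2 * l)) - 1 := by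
          linear_combination -h' + e1 - e2
        generalize hT : (4 * k ^ 4 - (4 * l ^ 4 + 8 * l ^ 3 + 6 * l ^ 2 + 2 * l)) = T at e4
        omega
      · exact hao
    have hB2lt : B ^ 2 < (a : ℤ) ^ 2 := by
      have e1 : ((a:ℤ)^2)^2 = (a:ℤ)^4 := by ring
      have e2 : (B^2)^2 = B^4 := by ring
      have h1 : (B^2)^2 < ((a:ℤ)^2)^2 := by linarith [pow_pos hC0 2]
      exact lt_of_pow_lt_pow_left₀ 2 (sq_nonneg _) h1
    rcases Int.even_or_odd B with hBe | hBo
    · -- B even, C odd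
      have hCodd : Odd C := by
        rcases Int.even_or_odd C with h1 | h1
        · exfalso
          have h2 : Even ((a:ℤ)^4) := by
            rw [h']
            exact Even.add (Int.even_pow.mpr ⟨hBe, by norm_num⟩)
              (Int.even_pow.mpr ⟨h1, by norm_num⟩)
          have h3 : Even ((a:ℤ)) := (Int.even_pow.mp h2).1
          rw [← Int.not_odd_iff_even] at h3
          exact h3 haodd
        · exact h1
      obtain ⟨B₁, hB₁⟩ := hBe
      have hB₁0 : B₁ ≠ 0 := by rintro rfl; simp at hB₁; omega
      have hClt : C < (a:ℤ)^2 := by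
        have e1 : ((a:ℤ)^2)^2 = (a:ℤ)^4 := by ring
        have h1 : C^2 < ((a:ℤ)^2)^2 := by linarith [pow_pos hB0 4]
        have hC0' : (0:ℤ) ≤ C := hC0.le
        exact lt_of_pow_lt_pow_left₀ 2 (by positivity) h1
      obtain ⟨d, hd⟩ : Even ((a:ℤ)^2 - C) := (haodd.pow).sub_odd hCodd
      obtain ⟨e, he⟩ : Even ((a:ℤ)^2 + C) := (haodd.pow).add_odd hCodd
      have hde_sum : d + e = (a:ℤ)^2 := by linarith
      have hde_diff : e - d = C := by linarith
      have hd0 : 0 < d := by linarith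
      have he0 : 0 < e := by linarith
      have heqde : d * e = (2 * B₁^2)^2 := by
        have h4 : 4 * (d * e) = 4 * (2*B₁^2)^2 := by
          linear_combination (-2*e)*hd - ((a:ℤ)^2 - C)*he + h' + (B + B₁ + B₁)*(B^2 + 4*B₁^2)*hB₁
        linarith
      have hco4 : IsCoprime ((a:ℤ)^4) (B^4) := hco.pow
      have hco4C : IsCoprime ((a:ℤ)^4) (C^2) := by
        have h1 := (hco4.neg_right).add_mul_left_right 1
        have h2 : -B^4 + (a:ℤ)^4 * 1 = C^2 := by linear_combination h'
        rwa [h2] at h1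
      have hcoaC : IsCoprime ((a:ℤ)) C :=
        (IsCoprime.pow_left_iff (by norm_num)).mp
          ((IsCoprime.pow_right_iff (by norm_num)).mp hco4C)
      have hcode : IsCoprime d e := by
        obtain ⟨x, y, hxy⟩ := (hcoaC.pow_left : IsCoprime ((a:ℤ)^2) C)
        exact ⟨x - y, x + y, by linear_combination hxy + x * hde_sum + y * hde_diff⟩
      obtain ⟨u, hu0, hdu⟩ := sq_pos_of_coprime' (c := 2*B₁^2) hcode heqde hd0
      obtain ⟨w, hw0, hew⟩ := sq_pos_of_coprime' (c := 2*B₁^2) hcode.symm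
        (by linear_combination heqde) he0
      have hu0' : 0 < u := by
        rcases hu0.eq_or_lt with h1 | h1
        · exfalso; rw [← h1] at hdu; simp at hdu; omega
        · exact h1
      have hw0' : 0 < w := by
        rcases hw0.eq_or_lt with h1 | h1
        · exfalso; rw [← h1] at hew; simp at hew; omega
        · exact h1
      have huw : u * w = 2 * B₁^2 := by
        have hsq : (u*w)^2 = (2*B₁^2)^2 := by rw [mul_pow, ← hdu, ← hew]; exact heqde
        have hfac : (u*w - 2*B₁^2) * (u*w + 2*B₁^2) = 0 := by linear_combination hsq
        rcases mul_eq_zero.mp hfac with h1 | h1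
        · linarith
        · linarith [sq_nonneg B₁, mul_pos hu0' hw0']
      have hcouw : IsCoprime u w := by
        have h1 := hcode
        rw [hdu, hew] at h1
        exact (IsCoprime.pow_left_iff two_pos).mp ((IsCoprime.pow_right_iff two_pos).mp h1)
      have huwsq : u^2 + w^2 = (a:ℤ)^2 := by rw [← hdu, ← hew]; exact hde_sum
      have key : ∀ u w : ℤ, 0 < u → 0 < w → IsCoprime u w → u^2 + w^2 = (a:ℤ)^2 →
          u * w = 2 * B₁^2 → Even w → False := by
        intro u w hu0 hw0 hcouw huwsq huw hwe
        obtain ⟨w₁, hw₁⟩ := hwe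
        have huodd : Odd u := by
          rcases Int.even_or_odd u with h1 | h1
          · exact absurd (not_even_even hcouw h1 ⟨w₁, hw₁⟩) (by simp)
          · exact h1
        have hw₁0 : 0 < w₁ := by omega
        have huw₁ : u * w₁ = B₁^2 := by
          have h2 : 2 * (u * w₁) = 2 * B₁^2 := by linear_combination huw - u * hw₁
          linarith
        have hcouw₁ : IsCoprime u w₁ :=
          hcouw.of_isCoprime_of_dvd_right ⟨2, by linarith⟩
        obtain ⟨p, hp0, hup⟩ := sq_pos_of_coprime' (c := B₁) hcouw₁ huw₁ hu0
        obtain ⟨q, hq0, hwq⟩ := sq_pos_of_coprime' (c := B₁) hcouw₁.symm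
          (by linear_combination huw₁) hw₁0
        have hq0' : 0 < q := by
          rcases hq0.eq_or_lt with h1 | h1
          · exfalso; rw [← h1] at hwq; simp at hwq; omega
          · exact h1
        have hpa : p^4 + 4*q^4 = (a:ℤ)^2 := by
          have h1 : u^2 + w^2 = p^4 + 4*q^4 := by rw [hup, hw₁, hwq]; ring
          linarith
        have hpodd : Odd p := by
          have h1 : Odd (p^2) := hup ▸ huodd
          rcases Int.even_or_odd p with h2 | h2
          · exfalso
            have h3 : Even (p^2) := Int.even_pow.mpr ⟨h2, two_ne_zero⟩
            rw [← Int.not_odd_iff_even] at h3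
            exact h3 h1
          · exact h2
        have hp2lt : p^2 < (a:ℤ) := by
          have e1 : (p^2)^2 = p^4 := by ring
          have h1 : (p^2)^2 < (a:ℤ)^2 := by linarith [pow_pos hq0' 4]
          exact lt_of_pow_lt_pow_left₀ 2 haZ.le h1
        obtain ⟨d₂, hd₂⟩ : Even ((a:ℤ) - p^2) := haodd.sub_odd hpodd.pow
        obtain ⟨e₂, he₂⟩ : Even ((a:ℤ) + p^2) := haodd.add_odd hpodd.pow
        have hd₂sum : d₂ + e₂ = (a:ℤ) := by linarith
        have he₂diff : e₂ - d₂ = p^2 := by linarith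
        have hd₂0 : 0 < d₂ := by linarith
        have he₂0 : 0 < e₂ := by linarith [sq_nonneg p, haZ]
        have heq3 : d₂ * e₂ = (q^2)^2 := by
          have h4 : 4*(d₂*e₂) = 4*(q^2)^2 := by
            linear_combination (-2*e₂)*hd₂ - ((a:ℤ) - p^2)*he₂ - hpa
          linarith
        have hc1 : IsCoprime (u^2) ((a:ℤ)^2) := by
          have h1 := (hcouw.pow (m := 2) (n := 2)).add_mul_left_right 1
          have h2 : w^2 + u^2*1 = (a:ℤ)^2 := by linear_combination huwsq
          rwa [h2] at h1
        have hc2 : IsCoprime p ((a:ℤ)) := by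
          have h1 : IsCoprime (u^2) ((a:ℤ)) := (IsCoprime.pow_right_iff two_pos).mp hc1
          rw [hup] at h1
          rw [show ((p^2)^2 : ℤ) = p^4 by ring] at h1
          exact (IsCoprime.pow_left_iff (by norm_num)).mp h1
        have hcode₂ : IsCoprime d₂ e₂ := by
          obtain ⟨x, y, hxy⟩ := (hc2.symm.pow_right : IsCoprime ((a:ℤ)) (p^2))
          exact ⟨x - y, x + y, by linear_combination hxy + x * hd₂sum + y * he₂diff⟩
        obtain ⟨f, hf0, hdf⟩ := sq_pos_of_coprime' (c := q^2) hcode₂ heq3 hd₂0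
        obtain ⟨gg, hg0, heg⟩ := sq_pos_of_coprime' (c := q^2) hcode₂.symm
          (by linear_combination heq3) he₂0
        have hf0' : 0 < f := by
          rcases hf0.eq_or_lt with h1 | h1
          · exfalso; rw [← h1] at hdf; simp at hdf; omega
          · exact h1
        have hg0' : 0 < gg := by
          rcases hg0.eq_or_lt with h1 | h1
          · exfalso; rw [← h1] at heg; simp at heg; omega
          · exact h1
        have hfg : f * gg = q^2 := by
          have hsq : (f*gg)^2 = (q^2)^2 := by rw [mul_pow, ← hdf, ← heg]; exact heq3
          have hfac : (f*gg - q^2)*(f*gg + q^2) = 0 := by linear_combination hsq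
          rcases mul_eq_zero.mp hfac with h1 | h1
          · linarith
          · linarith [sq_nonneg q, mul_pos hf0' hg0']
        have hcofg : IsCoprime f gg := by
          have h1 := hcode₂
          rw [hdf, heg] at h1
          exact (IsCoprime.pow_left_iff two_pos).mp ((IsCoprime.pow_right_iff two_pos).mp h1)
        obtain ⟨f₁, hf₁0, hff₁⟩ := sq_pos_of_coprime' (c := q) hcofg hfg hf0'
        obtain ⟨g₁, hg₁0, hgg₁⟩ := sq_pos_of_coprime' (c := q) hcofg.symm
          (by linear_combination hfg) hg0'
        have hg₁4 : g₁^4 = e₂ := by rw [heg, hgg₁]; ring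
        have hfin : g₁^4 = f₁^4 + p^2 := by
          have h1 : e₂ - d₂ = p^2 := he₂diff
          rw [heg, hdf, hgg₁, hff₁] at h1
          linear_combination h1
        have hg₁0' : 0 < g₁ := by
          rcases hg₁0.eq_or_lt with h1 | h1
          · exfalso; rw [← h1] at hgg₁; simp at hgg₁; rw [hgg₁] at hg0'; omega
          · exact h1
        set G : ℕ := g₁.natAbs with hGdef
        have hGcast : (G:ℤ) = g₁ := Int.natAbs_of_nonneg hg₁0
        have hg₁lt : g₁^4 < (a:ℤ) := by rw [hg₁4]; linarith
        have hGlt : G < a := by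
          have h1 : (G:ℤ)^4 < (a:ℤ) := by rw [hGcast]; exact hg₁lt
          have hG1 : 1 ≤ (G:ℤ) := by rw [hGcast]; exact hg₁0'
          have h2 : (G:ℤ) ≤ (G:ℤ)^4 := le_self_pow₀ hG1 (by norm_num)
          have h3 : (G:ℤ) < (a:ℤ) := by linarith
          exact_mod_cast h3
        have hGeq : ((G:ℕ):ℤ)^4 = f₁^4 + p^2 := by rw [hGcast]; exact hfin
        rcases IH G hGlt f₁ p hGeq with h0 | h0
        · rw [h0] at hff₁; simp at hff₁; rw [hff₁] at hf0'; omega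
        · rw [h0] at hpodd; simp at hpodd
      have hone : Even u ∨ Even w := by
        have h1 : Even (u*w) := ⟨B₁^2, by linarith⟩
        exact Int.even_mul.mp h1
      rcases hone with h1 | h1
      · exact key w u hw0' hu0' hcouw.symm (by linarith) (by linear_combination huw) h1
      · exact key u w hu0' hw0' hcouw huwsq huw h1
    · -- B odd, C even
      obtain ⟨u, hu⟩ : Even ((a : ℤ) ^ 2 + B ^ 2) :=
        Odd.add_odd (haodd.pow) (hBo.pow)
      obtain ⟨v, hv⟩ : Even ((a : ℤ) ^ 2 - B ^ 2) :=
        Odd.sub_odd (haodd.pow) (hBo.pow)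
      have hsum : u + v = (a : ℤ) ^ 2 := by linarith
      have hdiff : u - v = B ^ 2 := by linarith
      have hCe : Even C := by
        have hsq : Even (C ^ 2) := by
          refine ⟨2 * (u * v), ?_⟩
          linear_combination -h' + ((a:ℤ)^2 - B^2) * hu + (u + u) * hv
        exact (Int.even_pow.mp hsq).1
      obtain ⟨C₁, hC₁⟩ := hCe
      have heq2 : u * v = C₁ ^ 2 := by
        have h4 : 4 * (u * v) = 4 * C₁ ^ 2 := by
          linear_combination h' - ((a:ℤ)^2 - B^2) * hu - (u + u) * hv + (C + C₁ + C₁) * hC₁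
        linarith
      have hupos : 0 < u := by linarith [pow_pos haZ 2, pow_pos hB0 2]
      have hvpos : 0 < v := by linarith
      have hcouv : IsCoprime u v := by
        obtain ⟨x, y, hxy⟩ := (hco.pow : IsCoprime ((a:ℤ)^2) (B^2))
        exact ⟨x + y, x - y, by linear_combination hxy + x * hsum + y * hdiff⟩
      obtain ⟨s, hs0, hsu⟩ := sq_pos_of_coprime' hcouv heq2 hupos
      obtain ⟨t, ht0, htv⟩ := sq_pos_of_coprime' (c := C₁) hcouv.symm (by linear_combination heq2) hvpos
      have hfin : s ^ 4 = t ^ 4 + ((a : ℤ) * B) ^ 2 := by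
        have huv2 : u ^ 2 - v ^ 2 = ((a:ℤ) * B) ^ 2 := by
          linear_combination (u - v) * hsum + (a:ℤ)^2 * hdiff
        rw [hsu, htv] at huv2
        linear_combination huv2
      set S : ℕ := s.natAbs with hSdef
      have hScast : (S : ℤ) = s := Int.natAbs_of_nonneg hs0
      have hSlt : S < a := by
        have h1 : (S : ℤ) ^ 2 < (a : ℤ) ^ 2 := by rw [hScast, ← hsu]; linarith
        by_contra hcontra
        push_neg at hcontra
        have h2 : (a:ℤ) ≤ (S:ℤ) := by exact_mod_cast hcontra
        have h3 : (a : ℤ) ^ 2 ≤ (S : ℤ) ^ 2 := pow_le_pow_left₀ haZ.le h2 2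
        linarith
      have hSeq : ((S : ℕ) : ℤ) ^ 4 = t ^ 4 + ((a : ℤ) * B) ^ 2 := by
        rw [hScast]; exact hfin
      rcases IH S hSlt t ((a : ℤ) * B) hSeq with h0 | h0
      · rw [h0] at htv
        simp at htv
        have : (a : ℤ) ^ 2 = B ^ 2 := by omega
        linarith
      · have : (a : ℤ) * B ≠ 0 := mul_ne_zero (by positivity) (by positivity)
        exact this h0
  case _ => -- descend by the gcd
    have hdvda : (g : ℤ) ∣ (a : ℤ) := Int.gcd_dvd_left _ _
    have hdvdB : (g : ℤ) ∣ B := Int.gcd_dvd_right _ _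
    obtain ⟨a₁, ha₁⟩ := Int.natCast_dvd_natCast.mp (by exact_mod_cast hdvda : (g:ℤ) ∣ (a:ℤ))
    obtain ⟨B₁, hB₁⟩ := hdvdB
    have hC2dvd : ((g : ℤ) ^ 2) ^ 2 ∣ C ^ 2 := by
      refine ⟨(a₁ : ℤ) ^ 4 - B₁ ^ 4, ?_⟩
      have : (a : ℤ) = (g : ℤ) * (a₁ : ℤ) := by exact_mod_cast ha₁
      rw [this, hB₁] at h'
      linear_combination -h'
    have hgC : (g : ℤ) ^ 2 ∣ C := (Int.pow_dvd_pow_iff two_ne_zero).mp hC2dvd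
    obtain ⟨C₁, hC₁⟩ := hgC
    have hgZ : (0 : ℤ) < (g : ℤ) := by
      have : g ≠ 0 := by omega
      exact_mod_cast Nat.pos_of_ne_zero this
    have key : (a₁ : ℤ) ^ 4 = B₁ ^ 4 + C₁ ^ 2 := by
      have hmul : (g : ℤ) ^ 4 * ((a₁ : ℤ) ^ 4) = (g : ℤ) ^ 4 * (B₁ ^ 4 + C₁ ^ 2) := by
        have haq : (a : ℤ) = (g : ℤ) * (a₁ : ℤ) := by exact_mod_cast ha₁
        rw [haq, hB₁, hC₁] at h'
        linear_combination h'
      exact mul_left_cancel₀ (by positivity) hmul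
    have ha₁0 : 0 < a₁ := by
      rcases Nat.eq_zero_or_pos a₁ with h0 | h0
      · subst h0; rw [Nat.mul_zero] at ha₁; omega
      · exact h0
    have ha₁lt : a₁ < a := by
      calc a₁ = 1 * a₁ := (one_mul _).symm
      _ < g * a₁ := by exact (Nat.mul_lt_mul_right ha₁0).mpr (by omega)
      _ = a := ha₁.symm
    rcases IH a₁ ha₁lt B₁ C₁ key with h0 | h0
    · rw [h0, mul_zero] at hB₁; omega
    · rw [h0, mul_zero] at hC₁; omega

/-- The only rational points on `y² = x³ - x` are `(0,0)`, `(1,0)` and `(-1,0)`; in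
particular `y = 0` for every rational solution. -/
theorem rational_points_y2_eq_x3_sub_x (x y : ℚ) (h : y ^ 2 = x ^ 3 - x) :
    y = 0 ∧ (x = 0 ∨ x = 1 ∨ x = -1) := by
  have hy : y = 0 := by
    by_contra hy0
    set p : ℤ := x.num with hp
    set q : ℤ := (x.den : ℤ) with hq
    have hq0 : 0 < q := by rw [hq]; exact_mod_cast x.pos
    have hco : IsCoprime p q := by
      rw [Int.isCoprime_iff_gcd_eq_one]
      exact x.reduced
    have hxpq : (x : ℚ) = (p : ℚ) / (q : ℚ) := (Rat.num_div_den x).symm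
    have hqQ0 : ((q : ℚ)) ≠ 0 := by
      simp only [hq]
      exact_mod_cast Nat.pos_iff_ne_zero.mp x.pos
    set m : ℚ := y * (q:ℚ)^2 with hm
    have hm2 : m^2 = ((p*q*(p^2 - q^2) : ℤ) : ℚ) := by
      push_cast
      rw [hm, mul_pow, h, hxpq]
      field_simp
    have hmden : m.den = 1 := by
      have h1 : (m*m).den = 1 := by
        rw [show m*m = m^2 by ring, hm2]
        exact Rat.den_intCast _
      have h2 := Rat.mul_self_den m
      rw [h1] at h2
      exact Nat.dvd_one.mp ⟨m.den, h2⟩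
    set n : ℤ := m.num with hn
    have hnm : (n:ℚ) = m := by
      rw [hn, ← Rat.den_eq_one_iff]; exact hmden
    have hneq : n^2 = p*q*(p^2-q^2) := by
      have hcast : ((n^2 : ℤ) : ℚ) = ((p*q*(p^2 - q^2) : ℤ) : ℚ) := by
        push_cast
        calc ((n:ℚ))^2 = m^2 := by rw [hnm]
        _ = ((p*q*(p^2 - q^2) : ℤ) : ℚ) := hm2
        _ = _ := by push_cast; ring
      exact_mod_cast hcast
    have hn0 : n ≠ 0 := by
      intro h0
      have hm0 : m = 0 := by rw [← hnm, h0]; simp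
      rw [hm] at hm0
      rcases mul_eq_zero.mp hm0 with h1 | h1
      · exact hy0 h1
      · exact hqQ0 (pow_eq_zero_iff two_ne_zero |>.mp h1)
    have hsq : 0 < n^2 := by positivity
    have hp0 : p ≠ 0 := by
      intro h0
      rw [h0] at hneq
      simp at hneq
      exact hn0 hneq
    have hpq2 : p^2 - q^2 ≠ 0 := by
      intro h0
      rw [h0] at hneq
      simp at hneq
      exact hn0 hneq
    have hco2 : IsCoprime p (p^2 - q^2) := by
      have h1 := ((hco.pow_right (n := 2)).neg_right).add_mul_left_right p
      have h2 : -q^2 + p * p = p^2 - q^2 := by ring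
      rwa [h2] at h1
    have hcoq2 : IsCoprime q (p^2 - q^2) := by
      have h1 := (hco.symm.pow_right (n := 2)).add_mul_left_right (-q)
      have h2 : p^2 + q * (-q) = p^2 - q^2 := by ring
      rwa [h2] at h1
    obtain ⟨A, hA⟩ := Int.sq_of_isCoprime (hco.mul_right hco2)
      (show p * (q * (p^2 - q^2)) = n^2 by linear_combination -hneq)
    obtain ⟨Bq, hBq⟩ := Int.sq_of_isCoprime (hco.symm.mul_right hcoq2)
      (show q * (p * (p^2 - q^2)) = n^2 by linear_combination -hneq)
    obtain ⟨Cc, hCc⟩ := Int.sq_of_isCoprime (hco2.symm.mul_right hcoq2.symm)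
      (show (p^2 - q^2) * (p * q) = n^2 by linear_combination -hneq)
    have hBq' : q = Bq^2 := by
      rcases hBq with h1 | h1
      · exact h1
      · exfalso; linarith [sq_nonneg Bq]
    have hA0 : A ≠ 0 := by
      intro h0; rw [h0] at hA
      rcases hA with h1 | h1 <;> simp at h1 <;> exact hp0 h1
    have hBq0 : Bq ≠ 0 := by
      intro h0; rw [h0] at hBq'; simp at hBq'
      rw [hBq'] at hq0; exact lt_irrefl _ hq0
    have hCc0 : Cc ≠ 0 := by
      intro h0; rw [h0] at hCc
      rcases hCc with h1 | h1 <;> simp at h1 <;> exact hpq2 h1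
    have hA2pos : 0 < A^2 := by
      have := pow_pos (abs_pos.mpr hA0) 2
      rwa [sq_abs] at this
    have hCc2pos : 0 < Cc^2 := by
      have := pow_pos (abs_pos.mpr hCc0) 2
      rwa [sq_abs] at this
    rcases hA with hA | hA
    · -- p = A² > 0, so p² - q² = Cc²
      have hppos : 0 < p := by rw [hA]; exact hA2pos
      have hCc' : p^2 - q^2 = Cc^2 := by
        rcases hCc with h1 | h1
        · exact h1
        · exfalso
          have hprod : 0 < p * q := mul_pos hppos hq0
          rw [h1] at hneq
          have he : p * q * -Cc^2 = -(p * q * Cc^2) := by ring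
          linarith [mul_pos hprod hCc2pos, hsq, hneq, he]
      have h1 : ((A.natAbs : ℕ) : ℤ)^2 = A^2 := by
        rw [← Int.abs_eq_natAbs, sq_abs]
      have hkey : ((A.natAbs : ℕ) : ℤ)^4 = Bq^4 + Cc^2 := by
        linear_combination (((A.natAbs : ℕ) : ℤ)^2 + A^2) * h1 - (p + A^2) * hA
          + hCc' + (q + Bq^2) * hBq'
      rcases no44 A.natAbs Bq Cc hkey with h0 | h0
      · exact hBq0 h0
      · exact hCc0 h0
    · -- p = -A² < 0, so q² - p² = Cc²
      have hpneg : p < 0 := by rw [hA]; linarith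
      have hCc' : q^2 - p^2 = Cc^2 := by
        rcases hCc with h1 | h1
        · exfalso
          have hprod : p * q < 0 := mul_neg_of_neg_of_pos hpneg hq0
          rw [h1] at hneq
          have he : Cc^2 * (p * q) = -((-(p*q)) * Cc^2) := by ring
          linarith [mul_pos (neg_pos.mpr hprod) hCc2pos, hsq, hneq, he]
        · linarith
      have h1 : ((Bq.natAbs : ℕ) : ℤ)^2 = Bq^2 := by
        rw [← Int.abs_eq_natAbs, sq_abs]
      have hkey : ((Bq.natAbs : ℕ) : ℤ)^4 = A^4 + Cc^2 := by
        linear_combination (((Bq.natAbs : ℕ) : ℤ)^2 + Bq^2) * h1 - (q + Bq^2) * hBq'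
          + hCc' + (p - A^2) * hA
      rcases no44 Bq.natAbs A Cc hkey with h0 | h0
      · exact hA0 h0
      · exact hCc0 h0
  refine ⟨hy, ?_⟩
  rw [hy] at h
  have hfac : x * (x - 1) * (x + 1) = 0 := by linear_combination -h
  rcases mul_eq_zero.mp hfac with h1 | h1
  · rcases mul_eq_zero.mp h1 with h2 | h2
    · exact Or.inl h2
    · exact Or.inr (Or.inl (by linarith [sub_eq_zero.mp h2]))
  · exact Or.inr (Or.inr (by linarith [eq_neg_of_add_eq_zero_left h1]))
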